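/- Let a ≥ 0, b ∈ ℝ with (a,b) ≠ (0,0), n ∈ ℕ*, ν = π/ℓ, and μ₊ = (a+δ)/2 with δ = √(a²−4b²) if a² ≥ 4b² and δ = i√(4b²−a²) otherwise. Then no zero z of φ₊(z) = (z−μ₊)e^{2izℓ} − (z+μ₊) has Re(z) = nν. -/

import Mathlib

open Complex

set_option maxHeartbeats 1000000 in
/-- For `a ≥ 0`, `b ∈ ℝ`, `(a,b) ≠ (0,0)` and `n ≥ 1`, no zero of
`φ₊(z) = (z-μ₊)e^{2izℓ} - (z+μ₊)` has real part `nν` (`ν = π/ℓ`). -/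
theorem phi_plus_no_zero_on_line (ℓ : ℝ) (hℓ : 0 < ℓ) (a b : ℝ)
    (ha : 0 ≤ a) (hab : (a, b) ≠ (0, 0)) (n : ℕ) (hn : 1 ≤ n)
    (ν : ℝ) (hν : ν = Real.pi / ℓ)
    (δ : ℂ)
    (hδ : δ = if a ^ 2 ≥ 4 * b ^ 2 then (Real.sqrt (a ^ 2 - 4 * b ^ 2) : ℂ)
              else I * (Real.sqrt (4 * b ^ 2 - a ^ 2) : ℂ))
    (μp : ℂ) (hμp : μp = ((a : ℂ) + δ) / 2) :
    ∀ z : ℂ, (z - μp) * exp (2 * I * z * ℓ) - (z + μp) = 0 → z.re ≠ n * ν := by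
  intro z hz heq
  have hℓ' : ℓ ≠ 0 := ne_of_gt hℓ
  set x := z.re with hx
  set y := z.im with hy
  have hx2 : 2 * x * ℓ = (n : ℝ) * (2 * Real.pi) := by
    rw [heq, hν]; field_simp
  have harg : (2 * I * z * ℓ : ℂ)
      = (↑(-(2 * y * ℓ)) : ℂ) + ↑((n : ℝ) * (2 * Real.pi)) * I := by
    apply Complex.ext <;>
      simp [Complex.mul_re, Complex.mul_im, hy] <;> nlinarith [hx2]
  have hexp : exp (2 * I * z * ℓ) = (↑(Real.exp (-(2 * y * ℓ))) : ℂ) := by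
    rw [harg, Complex.exp_add, ← Complex.ofReal_exp]
    have : (↑((n : ℝ) * (2 * Real.pi)) * I : ℂ)
        = (↑(n : ℤ) : ℂ) * (2 * ↑Real.pi * I) := by push_cast; ring
    rw [this, Complex.exp_int_mul_two_pi_mul_I, mul_one]
  set ρ := Real.exp (-(2 * y * ℓ)) with hρ
  have hρpos : 0 < ρ := Real.exp_pos _
  have hz' : (z - μp) * (↑ρ : ℂ) = z + μp := by
    rw [← hexp]; exact sub_eq_zero.mp hz
  have him : (y - μp.im) * ρ = y + μp.im := by
    have := congrArg Complex.im hz'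
    simpa [Complex.mul_im, Complex.sub_im, Complex.add_im] using this
  have hre : (x - μp.re) * ρ = x + μp.re := by
    have := congrArg Complex.re hz'
    simpa [Complex.mul_re, Complex.sub_re, Complex.add_re] using this
  by_cases hcase : a ^ 2 ≥ 4 * b ^ 2
  · -- real δ case
    rw [if_pos hcase] at hδ
    set d := Real.sqrt (a ^ 2 - 4 * b ^ 2) with hd
    have hd0 : 0 ≤ d := Real.sqrt_nonneg _
    have hμ : μp = ((a + d) / 2 : ℝ) := by rw [hμp, hδ]; push_cast; ring
    have hμim : μp.im = 0 := by rw [hμ]; simp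
    have hμre : μp.re = (a + d) / 2 := by rw [hμ]; simp
    rw [hμim] at him
    have hy0 : y = 0 := by
      by_contra hy0
      have hρ1 : ρ = 1 := by
        have : y * (ρ - 1) = 0 := by ring_nf; ring_nf at him; linarith
        rcases mul_eq_zero.mp this with h | h
        · exact absurd h hy0
        · linarith
      have := (Real.exp_eq_one_iff _).mp (hρ.symm ▸ hρ1)
      apply hy0; nlinarith
    have hρ1 : ρ = 1 := by rw [hρ, hy0]; simp
    rw [hμre, hρ1] at hre
    have ha0 : a = 0 := by linarith
    have hb0 : b = 0 := by nlinarith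
    exact hab (by rw [ha0, hb0])
  · -- imaginary δ case
    rw [if_neg hcase] at hδ
    push_neg at hcase
    set s := Real.sqrt (4 * b ^ 2 - a ^ 2) with hs
    have hs0 : 0 < s := Real.sqrt_pos.mpr (by linarith)
    have hμ : μp = (↑(a / 2) : ℂ) + (↑(s / 2) : ℂ) * I := by
      rw [hμp, hδ]; push_cast; ring
    have hμim : μp.im = s / 2 := by rw [hμ]; simp
    rw [hμim] at him
    have key : (y - s / 2) * ρ < y + s / 2 := by
      rcases lt_trichotomy y 0 with h | h | h
      · have hρ1 : 1 < ρ := by rw [hρ]; exact Real.one_lt_exp_iff.mpr (by nlinarith [mul_neg_of_neg_of_pos h hℓ])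
        nlinarith [mul_neg_of_neg_of_pos (show y - s / 2 < 0 by linarith)
          (show 0 < ρ - 1 by linarith)]
      · have hρ1 : ρ = 1 := by rw [hρ, h]; simp
        rw [hρ1]; linarith
      · have hρ1 : ρ < 1 := by rw [hρ]; exact Real.exp_lt_one_iff.mpr (by nlinarith [mul_pos h hℓ])
        nlinarith [mul_neg_of_pos_of_neg h (show ρ - 1 < 0 by linarith),
          mul_pos hs0 (show 0 < ρ + 1 by linarith)]
    linarith
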